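/- If f : ℝⁿ → ℝ is a quadratic function f(x) = α₀ + αᵀx + ½xᵀHx with H symmetric, and S ∈ ℝ^{n×m}, T ∈ ℝ^{n×k} have full row rank n, then the nested-set Hessian is exact: ∇²_s f(x⁰;S,T) = H = ∇²f(x⁰) for every x⁰ ∈ ℝⁿ. -/

import Mathlib

open Matrix Metric RealInnerProductSpace

lemma aux_isUnit_mul_transpose {n m : ℕ} (A : Matrix (Fin n) (Fin m) ℝ)
    (h : A.rank = n) : IsUnit (A * Aᵀ) := by
  have h2 : (A * Aᵀ).rank = n := by rw [Matrix.rank_self_mul_transpose, h]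
  rw [← Matrix.mulVec_surjective_iff_isUnit]
  have htop : LinearMap.range (A * Aᵀ).mulVecLin = ⊤ := by
    apply Submodule.eq_top_of_finrank_eq
    simpa [Matrix.rank] using h2
  intro y
  obtain ⟨x, hx⟩ := LinearMap.range_eq_top.mp htop y
  exact ⟨x, by rw [← hx, Matrix.mulVecLin_apply]⟩


/-- The induced 2-norm (operator norm) of a matrix. -/
noncomputable def opNorm {m n : ℕ} (A : Matrix (Fin m) (Fin n) ℝ) : ℝ :=
  ‖LinearMap.toContinuousLinearMap (Matrix.toEuclideanLin A)‖

/-- The Hessian matrix of f at x. -/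
noncomputable def hess {n : ℕ} (f : EuclideanSpace ℝ (Fin n) → ℝ)
    (x : EuclideanSpace ℝ (Fin n)) : Matrix (Fin n) (Fin n) ℝ :=
  Matrix.of fun i j =>
    iteratedFDeriv ℝ 2 f x ![EuclideanSpace.single i 1, EuclideanSpace.single j 1]

/-- The generalized simplex gradient ∇_s f(y;T) = (Tᵀ)† δ_f(y;T); since T has
full row rank, (Tᵀ)† = (T Tᵀ)⁻¹ T. -/
noncomputable def simplexGrad {n k : ℕ} (f : EuclideanSpace ℝ (Fin n) → ℝ)
    (t : Fin k → EuclideanSpace ℝ (Fin n)) (T : Matrix (Fin n) (Fin k) ℝ)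
    (y : EuclideanSpace ℝ (Fin n)) : Fin n → ℝ :=
  ((T * Tᵀ)⁻¹ * T).mulVec fun j => f (y + t j) - f y

/-- The nested-set Hessian ∇²_s f(x⁰;S,T) = (Sᵀ)† δ_{∇_s f}(x⁰;S,T); since S
has full row rank, (Sᵀ)† = (S Sᵀ)⁻¹ S.  The i-th row of δ_{∇_s f} is
(∇_s f(x⁰+sⁱ;T) − ∇_s f(x⁰;T))ᵀ. -/
noncomputable def nestedSetHessian {n m k : ℕ} (f : EuclideanSpace ℝ (Fin n) → ℝ)
    (s : Fin m → EuclideanSpace ℝ (Fin n)) (S : Matrix (Fin n) (Fin m) ℝ)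
    (t : Fin k → EuclideanSpace ℝ (Fin n)) (T : Matrix (Fin n) (Fin k) ℝ)
    (x0 : EuclideanSpace ℝ (Fin n)) : Matrix (Fin n) (Fin n) ℝ :=
  ((S * Sᵀ)⁻¹ * S) *
    Matrix.of fun i j => simplexGrad f t T (x0 + s i) j - simplexGrad f t T x0 j

/-- if f is a quadratic function with symmetric Hessian matrix H
and S, T have full row rank, then the nested-set Hessian is exact:
∇²_s f(x⁰;S,T) = H = ∇²f(x⁰) for every x⁰. -/
theorem nested_set_hessian_exact_for_quadratics {n m k : ℕ}
    (a0 : ℝ) (a : Fin n → ℝ) (H : Matrix (Fin n) (Fin n) ℝ) (hH : H.IsSymm)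
    (f : EuclideanSpace ℝ (Fin n) → ℝ)
    (hf : ∀ x, f x = a0 + (∑ i, a i * x i)
      + (1 / 2) * ∑ i, ∑ j, x i * H i j * x j)
    (s : Fin m → EuclideanSpace ℝ (Fin n)) (S : Matrix (Fin n) (Fin m) ℝ)
    (hSdef : S = Matrix.of fun i j => s j i) (hSrank : S.rank = n)
    (t : Fin k → EuclideanSpace ℝ (Fin n)) (T : Matrix (Fin n) (Fin k) ℝ)
    (hTdef : T = Matrix.of fun i j => t j i) (hTrank : T.rank = n)
    (x0 : EuclideanSpace ℝ (Fin n)) :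
    nestedSetHessian f s S t T x0 = H ∧ hess f x0 = H := by
  constructor
  ·
    have hTu := aux_isUnit_mul_transpose T hTrank
    have hSu := aux_isUnit_mul_transpose S hSrank
    have hsym : ∀ (u v : EuclideanSpace ℝ (Fin n)),
        (∑ i, ∑ j, u i * H i j * v j) = ∑ i, ∑ j, v i * H i j * u j := by
      intro u v
      rw [Finset.sum_comm]
      exact Finset.sum_congr rfl fun i _ => Finset.sum_congr rfl fun j _ => by
        rw [← hH.apply i j]; ring
    have step : ∀ (y w : EuclideanSpace ℝ (Fin n)), f (y + w) - f y =
        (∑ i, a i * w i) + (∑ i, ∑ j, y i * H i j * w j)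
          + (1/2) * ∑ i, ∑ j, w i * H i j * w j := by
      intro y w
      simp only [hf, PiLp.add_apply]
      have h1 : (∑ i, a i * (y i + w i)) = (∑ i, a i * y i) + ∑ i, a i * w i := by
        rw [← Finset.sum_add_distrib]
        exact Finset.sum_congr rfl fun i _ => by ring
      have h2 : (∑ i, ∑ j, (y i + w i) * H i j * (y j + w j))
          = (∑ i, ∑ j, y i * H i j * y j) + ((∑ i, ∑ j, y i * H i j * w j)
            + ((∑ i, ∑ j, w i * H i j * y j) + ∑ i, ∑ j, w i * H i j * w j)) := by
        simp only [← Finset.sum_add_distrib]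
        exact Finset.sum_congr rfl fun i _ => Finset.sum_congr rfl fun j _ => by ring
      rw [h1, h2, hsym w y]
      ring
    have key : ∀ (u v : EuclideanSpace ℝ (Fin n)),
        f (x0 + u + v) - f (x0 + u) - (f (x0 + v) - f x0)
          = ∑ i, ∑ j, u i * H i j * v j := by
      intro u v
      rw [step (x0 + u) v, step x0 v]
      have h4 : (∑ i, ∑ j, (x0 + u) i * H i j * v j)
          = (∑ i, ∑ j, x0 i * H i j * v j) + ∑ i, ∑ j, u i * H i j * v j := by
        simp only [PiLp.add_apply, ← Finset.sum_add_distrib]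
        exact Finset.sum_congr rfl fun i _ => Finset.sum_congr rfl fun j _ => by ring
      rw [h4]; ring
    -- the matrix of simplex-gradient differences equals Sᵀ * H
    have hM : (Matrix.of fun i j => simplexGrad f t T (x0 + s i) j
        - simplexGrad f t T x0 j) = Sᵀ * H := by
      ext i j
      have hd : (fun l => f ((x0 + s i) + t l) - f (x0 + s i))
          - (fun l => f (x0 + t l) - f x0)
          = Tᵀ.mulVec (fun b => ∑ a', s i a' * H a' b) := by
        funext l
        simp only [Pi.sub_apply, key (s i) (t l), Matrix.mulVec, dotProduct,
          Matrix.transpose_apply, hTdef, Matrix.of_apply]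
        rw [Finset.sum_comm]
        exact Finset.sum_congr rfl fun b _ => by rw [Finset.mul_sum]; exact Finset.sum_congr rfl fun a' _ => by ring
      calc (Matrix.of fun i j => simplexGrad f t T (x0 + s i) j
            - simplexGrad f t T x0 j) i j
          = ((T * Tᵀ)⁻¹ * T).mulVec ((fun l => f ((x0 + s i) + t l) - f (x0 + s i))
              - (fun l => f (x0 + t l) - f x0)) j := by
            simp [simplexGrad, Matrix.mulVec_sub]
        _ = (((T * Tᵀ)⁻¹ * (T * Tᵀ)).mulVec (fun b => ∑ a', s i a' * H a' b)) j := by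
            rw [hd, Matrix.mulVec_mulVec, Matrix.mul_assoc]
        _ = (Sᵀ * H) i j := by
            rw [Matrix.nonsing_inv_mul _ ((Matrix.isUnit_iff_isUnit_det _).mp hTu),
              Matrix.one_mulVec]
            simp [Matrix.mul_apply, hSdef]
    rw [nestedSetHessian, hM, ← Matrix.mul_assoc, Matrix.mul_assoc ((S * Sᵀ)⁻¹),
      Matrix.nonsing_inv_mul _ ((Matrix.isUnit_iff_isUnit_det _).mp hSu), Matrix.one_mul]
  · ext i j
    show iteratedFDeriv ℝ 2 f x0 ![EuclideanSpace.single i 1, EuclideanSpace.single j 1] = H i j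

    set A : EuclideanSpace ℝ (Fin n) →L[ℝ] EuclideanSpace ℝ (Fin n) := LinearMap.toContinuousLinearMap (Matrix.toEuclideanLin H) with hAdef
    set a' : EuclideanSpace ℝ (Fin n) := (WithLp.equiv 2 (Fin n → ℝ)).symm a with ha'
    have hAapp : ∀ (x : EuclideanSpace ℝ (Fin n)) (i' : Fin n), A x i' = ∑ j', H i' j' * x j' := by
      intro x i'
      simp [hAdef, Matrix.toEuclideanLin_apply, Matrix.mulVec, dotProduct]
    have hinner : ∀ x y : EuclideanSpace ℝ (Fin n), ⟪x, A y⟫ = ∑ i', ∑ j', x i' * H i' j' * y j' := by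
      intro x y
      rw [PiLp.inner_apply]
      exact Finset.sum_congr rfl fun i' _ => by
        rw [hAapp, RCLike.inner_apply, starRingEnd_apply, star_trivial, Finset.sum_mul]
        exact Finset.sum_congr rfl fun j' _ => by ring
    have hAsym : ∀ x y : EuclideanSpace ℝ (Fin n), ⟪A x, y⟫ = ⟪x, A y⟫ := by
      intro x y
      rw [real_inner_comm, hinner, hinner]
      rw [Finset.sum_comm]
      exact Finset.sum_congr rfl fun i' _ => Finset.sum_congr rfl fun j' _ => by
        rw [← hH.apply i' j']; ring
    have hfe : ∀ x, f x = a0 + ⟪a', x⟫ + (1/2) * ⟪x, A x⟫ := by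
      intro x
      rw [hf, hinner, PiLp.inner_apply]
      congr 2
      exact Finset.sum_congr rfl fun i _ => by rw [RCLike.inner_apply, conj_trivial]; simp [ha', mul_comm]
    -- the bilinear second-derivative map
    set B : EuclideanSpace ℝ (Fin n) →ₗ[ℝ] EuclideanSpace ℝ (Fin n) →L[ℝ] ℝ :=
      { toFun := fun u => ((innerSL ℝ u).comp A : EuclideanSpace ℝ (Fin n) →L[ℝ] ℝ)
        map_add' := fun u v => by
          ext w; simp [inner_add_left]
        map_smul' := fun c u => by
          ext w; simp [real_inner_smul_left] } with hBdef
    set L : EuclideanSpace ℝ (Fin n) →L[ℝ] EuclideanSpace ℝ (Fin n) →L[ℝ] ℝ := LinearMap.toContinuousLinearMap B with hLdef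
    set g : EuclideanSpace ℝ (Fin n) → (EuclideanSpace ℝ (Fin n) →L[ℝ] ℝ) := fun x => innerSL ℝ a' + L x with hgdef
    have hd1 : ∀ x, HasFDerivAt f (g x) x := by
      intro x
      have h1 : HasFDerivAt (fun y : EuclideanSpace ℝ (Fin n) => ⟪a', y⟫)
          ((fderivInnerCLM ℝ (a', x)).comp ((0 : EuclideanSpace ℝ (Fin n) →L[ℝ] EuclideanSpace ℝ (Fin n)).prod (ContinuousLinearMap.id ℝ (EuclideanSpace ℝ (Fin n))))) x :=
        (hasFDerivAt_const a' x).inner ℝ (hasFDerivAt_id x)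
      have h2 : HasFDerivAt (fun y : EuclideanSpace ℝ (Fin n) => ⟪y, A y⟫)
          ((fderivInnerCLM ℝ (x, A x)).comp ((ContinuousLinearMap.id ℝ (EuclideanSpace ℝ (Fin n))).prod A)) x :=
        (hasFDerivAt_id x).inner ℝ (A.hasFDerivAt)
      have h3 : HasFDerivAt f
          (((fderivInnerCLM ℝ (a', x)).comp ((0 : EuclideanSpace ℝ (Fin n) →L[ℝ] EuclideanSpace ℝ (Fin n)).prod (ContinuousLinearMap.id ℝ (EuclideanSpace ℝ (Fin n)))))
            + (1/2 : ℝ) • ((fderivInnerCLM ℝ (x, A x)).comp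
              ((ContinuousLinearMap.id ℝ (EuclideanSpace ℝ (Fin n))).prod A))) x := by
        have := ((hasFDerivAt_const a0 x).add h1).add (h2.const_mul (1/2 : ℝ))
        exact (this.congr_fderiv (by rw [zero_add])).congr_of_eventuallyEq
          (Filter.Eventually.of_forall fun y => hfe y)
      refine h3.congr_fderiv ?_
      ext w
      have : ⟪w, A x⟫ = ⟪x, A w⟫ := by rw [real_inner_comm, hAsym]
      simp [hgdef, hLdef, hBdef, this]
      ring
    have hfd : fderiv ℝ f = g := funext fun x => (hd1 x).fderiv
    have hd2 : ∀ x, HasFDerivAt g L x := by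
      intro x
      rw [hgdef]
      exact ((hasFDerivAt_const (innerSL ℝ a') x).add L.hasFDerivAt).congr_fderiv (zero_add _)
    rw [iteratedFDeriv_two_apply, hfd, (hd2 x0).fderiv]
    simp only [Matrix.cons_val_zero, Matrix.cons_val_one, Matrix.head_cons]
    show ⟪(EuclideanSpace.single i 1 : EuclideanSpace ℝ (Fin n)), A (EuclideanSpace.single j 1)⟫ = H i j
    rw [hinner]
    simp [EuclideanSpace.single_apply, Finset.sum_ite_eq', Finset.sum_ite_eq]
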